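/- arXiv:2103.09117 — 4 statements merged into one kernel-verified Lean document; each statement's English description precedes it below -/
import Mathlib

section
/- If f is holomorphic on the horizontal strip {z : Im z ∈ (-b, -a)} (where a < b), satisfies an exponential growth bound |f(x - it)| ≤ C(t) e^{s|x|} for all x ∈ ℝ and t ∈ (a,b) with C locally bounded, and f is Lebesgue integrable on the lines ℝ - it₁ and ℝ - it₂ for some t₁, t₂ ∈ (a,b), then the contour integrals ∫_{ℝ - it₁} f(z) dz and ∫_{ℝ - it₂} f(z) dz are equal. -/
open Complex Set MeasureTheory Filter Topology

private lemma strip_bddC {a b t₁ t₂ : ℝ} {C : ℝ → ℝ}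
    (ht₁ : t₁ ∈ Set.Ioo a b) (ht₂ : t₂ ∈ Set.Ioo a b) (h12 : t₁ ≤ t₂)
    (hC : ∀ t ∈ Set.Ioo a b, ∃ ε > 0, ∃ M : ℝ, ∀ t' ∈ Set.Ioo a b,
      |t' - t| < ε → C t' ≤ M) :
    ∃ M : ℝ, ∀ t ∈ Set.Icc t₁ t₂, C t ≤ M := by
  have hsub : Set.Icc t₁ t₂ ⊆ Set.Ioo a b := fun t ht =>
    ⟨lt_of_lt_of_le ht₁.1 ht.1, lt_of_le_of_lt ht.2 ht₂.2⟩
  choose! ε hε M hM using hC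
  obtain ⟨S, hS, hScov⟩ := (isCompact_Icc (a := t₁) (b := t₂)).elim_nhds_subcover
    (fun t => Metric.ball t (ε t)) (fun t ht => Metric.ball_mem_nhds t (hε t (hsub ht)))
  have ht₁m : t₁ ∈ Set.Icc t₁ t₂ := ⟨le_refl _, h12⟩
  obtain ⟨x₀, hx₀S, _⟩ := by simpa using hScov ht₁m
  have hne : S.Nonempty := ⟨x₀, hx₀S⟩
  refine ⟨S.sup' hne M, fun t ht => ?_⟩
  obtain ⟨x, hxS, hx⟩ := by simpa using hScov ht
  have hd : |t - x| < ε x := by rw [← Real.dist_eq]; exact hx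
  exact (hM x (hsub (hS x hxS)) t (hsub ht) hd).trans (Finset.le_sup' M hxS)

private lemma strip_integral_eq_aux (a b s t₁ t₂ : ℝ) (C : ℝ → ℝ) (f : ℂ → ℂ)
    (hf : DifferentiableOn ℂ f {z : ℂ | z.im ∈ Set.Ioo (-b) (-a)})
    (hC : ∀ t ∈ Set.Ioo a b, ∃ ε > 0, ∃ M : ℝ, ∀ t' ∈ Set.Ioo a b,
      |t' - t| < ε → C t' ≤ M)
    (hgrowth : ∀ (x : ℝ), ∀ t ∈ Set.Ioo a b,
      ‖f (x - t * Complex.I)‖ ≤ C t * Real.exp (s * |x|))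
    (ht₁ : t₁ ∈ Set.Ioo a b) (ht₂ : t₂ ∈ Set.Ioo a b) (h12 : t₁ < t₂)
    (hint₁ : Integrable (fun x : ℝ => f (x - t₁ * Complex.I)))
    (hint₂ : Integrable (fun x : ℝ => f (x - t₂ * Complex.I))) :
    (∫ x : ℝ, f (x - t₁ * Complex.I)) = ∫ x : ℝ, f (x - t₂ * Complex.I) := by
  obtain ⟨M₀, hM₀⟩ := strip_bddC ht₁ ht₂ h12.le hC
  set M : ℝ := max M₀ 0 with hMdef
  have hM : ∀ t ∈ Set.Icc t₁ t₂, C t ≤ M := fun t ht => (hM₀ t ht).trans (le_max_left _ _)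
  have hMnn : 0 ≤ M := le_max_right _ _
  set K : ℝ := max (t₁ ^ 2) (t₂ ^ 2) with hKdef
  have hsq : ∀ t ∈ Set.Icc t₁ t₂, t ^ 2 ≤ K := by
    intro t ht
    rcases le_or_gt 0 t with h0 | h0
    · exact le_trans (by nlinarith [ht.2] : t ^ 2 ≤ t₂ ^ 2) (le_max_right _ _)
    · exact le_trans (by nlinarith [ht.1] : t ^ 2 ≤ t₁ ^ 2) (le_max_left _ _)
  -- the Gaussian-regularized function
  set g : ℝ → ℂ → ℂ := fun ε z => Complex.exp (-(ε : ℂ) * z ^ 2) * f z with hgdef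
  -- norm of the Gaussian factor
  have hnorm : ∀ (ε x t : ℝ), ‖g ε ((x : ℂ) - t * I)‖
      = Real.exp (-ε * (x ^ 2 - t ^ 2)) * ‖f ((x : ℂ) - t * I)‖ := by
    intro ε x t
    rw [hgdef]
    simp only [norm_mul, Complex.norm_exp]
    congr 2
    simp [Complex.mul_re, Complex.sub_re, pow_two, Complex.sub_im]
  -- integrability of g ε on the two lines
  have hgint : ∀ (ε : ℝ), 0 ≤ ε → ∀ t : ℝ,
      Integrable (fun x : ℝ => f ((x : ℂ) - t * I)) →
      Integrable (fun x : ℝ => g ε ((x : ℂ) - t * I)) := by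
    intro ε hε t hint
    refine hint.bdd_mul (c := Real.exp (ε * t ^ 2)) ?_ (Filter.Eventually.of_forall fun x => ?_)
    · exact (Complex.continuous_exp.comp (by fun_prop)).aestronglyMeasurable
    · have : ‖Complex.exp (-(ε:ℂ) * ((x:ℂ) - t * I) ^ 2)‖
          = Real.exp (-ε * (x ^ 2 - t ^ 2)) := by
        simp only [Complex.norm_exp]
        congr 1
        simp [Complex.mul_re, Complex.sub_re, pow_two, Complex.sub_im]
      rw [this, Real.exp_le_exp]
      nlinarith [sq_nonneg x]
  -- the strip
  have hstrip : ∀ t ∈ Set.Icc t₁ t₂, ∀ x : ℝ, ((x : ℂ) - t * I) ∈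
      {z : ℂ | z.im ∈ Set.Ioo (-b) (-a)} := by
    intro t ht x
    have h1 : a < t := lt_of_lt_of_le ht₁.1 ht.1
    have h2 : t < b := lt_of_le_of_lt ht.2 ht₂.2
    simp [Set.mem_Ioo]
    constructor <;> linarith
  -- the key identity for the regularized function
  have key : ∀ ε : ℝ, 0 < ε →
      (∫ x : ℝ, g ε ((x : ℂ) - t₁ * I)) = ∫ x : ℝ, g ε ((x : ℂ) - t₂ * I) := by
    intro ε hε
    -- differentiability of g ε on the strip
    have hgd : DifferentiableOn ℂ (g ε) {z : ℂ | z.im ∈ Set.Ioo (-b) (-a)} := by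
      refine DifferentiableOn.mul ?_ hf
      exact (Complex.differentiable_exp.comp
        ((differentiable_pow 2).const_mul _)).differentiableOn
    -- rectangle identity
    have rect : ∀ R : ℝ,
        (∫ x : ℝ in -R..R, g ε ((x : ℂ) - t₂ * I))
          - (∫ x : ℝ in -R..R, g ε ((x : ℂ) - t₁ * I))
          + I • (∫ y : ℝ in -t₂..(-t₁), g ε ((R : ℂ) + y * I))
          - I • (∫ y : ℝ in -t₂..(-t₁), g ε ((-R : ℂ) + y * I)) = 0 := by
      intro R
      have := Complex.integral_boundary_rect_eq_zero_of_differentiableOn (g ε)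
        ((-R : ℂ) + (-t₂ : ℝ) * I) ((R : ℂ) + (-t₁ : ℝ) * I) ?_
      · simpa [Complex.ofReal_neg, neg_mul, sub_eq_add_neg] using this
      · refine hgd.mono fun p hp => ?_
        rw [Complex.mem_reProdIm] at hp
        have him : p.im ∈ Set.uIcc (-t₂) (-t₁) := by simpa using hp.2
        rw [Set.uIcc_of_le (by linarith)] at him
        simp only [Set.mem_setOf_eq, Set.mem_Ioo]
        exact ⟨lt_of_lt_of_le (by linarith [ht₂.2]) him.1,
          lt_of_le_of_lt him.2 (by linarith [ht₁.1])⟩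
    -- vertical integrals tend to 0
    have hvert : ∀ σ : ℝ → ℝ, (∀ R : ℝ, 0 ≤ R → |σ R| = R) →
        Tendsto (fun R : ℝ => ∫ y : ℝ in -t₂..(-t₁), g ε ((σ R : ℂ) + y * I))
          atTop (𝓝 0) := by
      intro σ hσ
      apply squeeze_zero_norm'
        (a := fun R => M * Real.exp (ε * K) * Real.exp (s * R - ε * R ^ 2) * (t₂ - t₁))
      · filter_upwards [eventually_ge_atTop (0 : ℝ)] with R hR
        have hb : ∀ y ∈ Set.uIoc (-t₂) (-t₁),
            ‖g ε ((σ R : ℂ) + y * I)‖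
              ≤ M * Real.exp (ε * K) * Real.exp (s * R - ε * R ^ 2) := by
          intro y hy
          rw [Set.uIoc_of_le (by linarith)] at hy
          have hyI : -y ∈ Set.Icc t₁ t₂ := ⟨by linarith [hy.2], by linarith [hy.1]⟩
          have hrw : ((σ R : ℂ) + y * I) = (σ R : ℂ) - (-y : ℝ) * I := by
            push_cast; ring
          rw [hrw, hnorm]
          have hfb := hgrowth (σ R) (-y) (by
            constructor
            · exact lt_of_lt_of_le ht₁.1 hyI.1
            · exact lt_of_le_of_lt hyI.2 ht₂.2)
          have hCb : C (-y) ≤ M := hM _ hyI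
          have hy2 : (-y) ^ 2 ≤ K := hsq _ hyI
          have hfb2 : ‖f ((σ R : ℂ) - (-y : ℝ) * I)‖ ≤ M * Real.exp (s * R) := by
            calc ‖f ((σ R : ℂ) - (-y : ℝ) * I)‖ ≤ C (-y) * Real.exp (s * |σ R|) := hfb
            _ ≤ M * Real.exp (s * R) := by
                rw [hσ R hR]
                exact mul_le_mul_of_nonneg_right hCb (Real.exp_nonneg _)
          have hexp : Real.exp (-ε * (σ R ^ 2 - (-y) ^ 2))
              ≤ Real.exp (ε * K) * Real.exp (-ε * R ^ 2) := by
            rw [← Real.exp_add, Real.exp_le_exp]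
            have : σ R ^ 2 = R ^ 2 := by
              rw [← _root_.sq_abs, hσ R hR]
            nlinarith
          calc Real.exp (-ε * (σ R ^ 2 - (-y) ^ 2)) * ‖f ((σ R : ℂ) - (-y : ℝ) * I)‖
              ≤ (Real.exp (ε * K) * Real.exp (-ε * R ^ 2)) * (M * Real.exp (s * R)) := by
                apply mul_le_mul hexp hfb2 (norm_nonneg _)
                positivity
            _ = M * Real.exp (ε * K) * Real.exp (s * R - ε * R ^ 2) := by
                rw [neg_mul, Real.exp_neg, Real.exp_sub]
                field_simp
        calc ‖∫ y : ℝ in -t₂..(-t₁), g ε ((σ R : ℂ) + y * I)‖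
            ≤ M * Real.exp (ε * K) * Real.exp (s * R - ε * R ^ 2) * |(-t₁) - (-t₂)| :=
              intervalIntegral.norm_integral_le_of_norm_le_const hb
          _ = M * Real.exp (ε * K) * Real.exp (s * R - ε * R ^ 2) * (t₂ - t₁) := by
              rw [_root_.abs_of_nonneg (by linarith : (0:ℝ) ≤ -t₁ - -t₂)]; ring_nf
      · have hpoly : Tendsto (fun R : ℝ => s * R - ε * R ^ 2) atTop atBot := by
          have : Tendsto (fun R : ℝ => R * (ε * R - s)) atTop atTop := by
            apply Filter.Tendsto.atTop_mul_atTop₀ tendsto_id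
            apply tendsto_atTop_add_const_right
            exact (tendsto_const_mul_atTop_of_pos hε).mpr tendsto_id
          have heq : (fun R : ℝ => s * R - ε * R ^ 2) = fun R => -(R * (ε * R - s)) := by
            funext R; ring
          rw [heq]
          exact tendsto_neg_atBot_iff.mpr this
        have h0 := ((Real.tendsto_exp_atBot.comp hpoly).const_mul
          (M * Real.exp (ε * K))).mul_const (t₂ - t₁)
        simpa using h0
    -- combine
    have hVp : Tendsto (fun R : ℝ => ∫ y : ℝ in -t₂..(-t₁), g ε ((R : ℂ) + y * I))
        atTop (𝓝 0) := by
      have h := hvert id (fun R hR => _root_.abs_of_nonneg hR)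
      simpa using h
    have hVm : Tendsto (fun R : ℝ => ∫ y : ℝ in -t₂..(-t₁), g ε (-(R : ℂ) + y * I))
        atTop (𝓝 0) := by
      have h := hvert (fun R => -R) (fun R hR => by rw [abs_neg, _root_.abs_of_nonneg hR])
      simpa [Complex.ofReal_neg] using h
    have hA : Tendsto (fun R : ℝ => ∫ x : ℝ in -R..R, g ε ((x : ℂ) - t₁ * I)) atTop
        (𝓝 (∫ x : ℝ, g ε ((x : ℂ) - t₁ * I))) :=
      intervalIntegral_tendsto_integral (hgint ε hε.le t₁ hint₁)
        tendsto_neg_atTop_atBot tendsto_id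
    have hB : Tendsto (fun R : ℝ => ∫ x : ℝ in -R..R, g ε ((x : ℂ) - t₂ * I)) atTop
        (𝓝 (∫ x : ℝ, g ε ((x : ℂ) - t₂ * I))) :=
      intervalIntegral_tendsto_integral (hgint ε hε.le t₂ hint₂)
        tendsto_neg_atTop_atBot tendsto_id
    have hcomb := ((hB.sub hA).add (hVp.const_smul I)).sub (hVm.const_smul I)
    have h0 := tendsto_nhds_unique (hcomb.congr (fun R => rect R)) tendsto_const_nhds
    simp only [smul_zero, add_zero, sub_zero] at h0
    exact (sub_eq_zero.mp h0).symm
  -- let ε → 0 along the sequence 1/(n+1), using dominated convergence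
  have hlim : ∀ t : ℝ, Integrable (fun x : ℝ => f ((x : ℂ) - t * I)) →
      Tendsto (fun n : ℕ => ∫ x : ℝ, g (1 / (n + 1)) ((x : ℂ) - t * I)) atTop
        (𝓝 (∫ x : ℝ, f ((x : ℂ) - t * I))) := by
    intro t hint
    apply tendsto_integral_of_dominated_convergence
      (F := fun (n : ℕ) (x : ℝ) => g (1 / (n + 1)) ((x : ℂ) - t * I))
      (fun x => Real.exp (t ^ 2) * ‖f ((x : ℂ) - t * I)‖)
    · intro n
      exact ((Complex.continuous_exp.comp (by fun_prop)).aestronglyMeasurable).mul hint.1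
    · exact (hint.norm.const_mul _)
    · intro n
      filter_upwards with x
      rw [hgdef]
      have hb : ‖Complex.exp (-(((1:ℝ) / (n + 1) : ℝ) : ℂ) * ((x : ℂ) - t * I) ^ 2)
          * f ((x : ℂ) - t * I)‖
          = Real.exp (-(1 / (n + 1)) * (x ^ 2 - t ^ 2)) * ‖f ((x : ℂ) - t * I)‖ := hnorm _ x t
      rw [hb]
      have h1 : (0 : ℝ) < 1 / (n + 1) := by positivity
      have h2 : (1 : ℝ) / (n + 1) ≤ 1 := by
        rw [div_le_one (by positivity)]
        have := Nat.cast_nonneg (α := ℝ) n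
        linarith
      refine mul_le_mul_of_nonneg_right (Real.exp_le_exp.mpr ?_) (norm_nonneg _)
      nlinarith [sq_nonneg x, sq_nonneg t]
    · filter_upwards with x
      have hc : Continuous (fun w : ℂ =>
          Complex.exp (-w * ((x : ℂ) - t * I) ^ 2) * f ((x : ℂ) - t * I)) :=
        (Complex.continuous_exp.comp (continuous_id.neg.mul continuous_const)).mul
          continuous_const
      have h0 : Tendsto (fun n : ℕ => (((1 / (n + 1) : ℝ)) : ℂ)) atTop (𝓝 0) := by
        rw [show (0 : ℂ) = ((0 : ℝ) : ℂ) from rfl]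
        exact (Complex.continuous_ofReal.tendsto 0).comp
          tendsto_one_div_add_atTop_nhds_zero_nat
      have := (hc.tendsto 0).comp h0
      simpa [hgdef, Function.comp_def] using this
  have h1 := hlim t₁ hint₁
  have h2 := hlim t₂ hint₂
  have heach : ∀ n : ℕ, (∫ x : ℝ, g (1 / (n + 1)) ((x : ℂ) - t₁ * I))
      = ∫ x : ℝ, g (1 / (n + 1)) ((x : ℂ) - t₂ * I) :=
    fun n => key _ (by positivity)
  exact tendsto_nhds_unique (h1.congr heach) h2



/-- If `f` is holomorphic on the strip `Ω_{a,b} = {x - i t : x ∈ ℝ, t ∈ (a,b)}`,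
of exponential type there (with a locally bounded constant `C`), and Lebesgue
integrable on two horizontal lines `ℝ - i t₁`, `ℝ - i t₂` of the strip, then the
integrals over these two lines coincide. -/
theorem strip_integral_eq (a b s t₁ t₂ : ℝ) (C : ℝ → ℝ) (f : ℂ → ℂ)
    (hab : a < b)
    (hf : DifferentiableOn ℂ f {z : ℂ | z.im ∈ Set.Ioo (-b) (-a)})
    (hC : ∀ t ∈ Set.Ioo a b, ∃ ε > 0, ∃ M : ℝ, ∀ t' ∈ Set.Ioo a b,
      |t' - t| < ε → C t' ≤ M)
    (hgrowth : ∀ (x : ℝ), ∀ t ∈ Set.Ioo a b,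
      ‖f (x - t * Complex.I)‖ ≤ C t * Real.exp (s * |x|))
    (ht₁ : t₁ ∈ Set.Ioo a b) (ht₂ : t₂ ∈ Set.Ioo a b)
    (hint₁ : Integrable (fun x : ℝ => f (x - t₁ * Complex.I)))
    (hint₂ : Integrable (fun x : ℝ => f (x - t₂ * Complex.I))) :
    (∫ x : ℝ, f (x - t₁ * Complex.I)) = ∫ x : ℝ, f (x - t₂ * Complex.I) := by
  rcases lt_trichotomy t₁ t₂ with h | h | h
  · exact strip_integral_eq_aux a b s t₁ t₂ C f hf hC hgrowth ht₁ ht₂ h hint₁ hint₂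
  · rw [h]
  · exact (strip_integral_eq_aux a b s t₂ t₁ C f hf hC hgrowth ht₂ ht₁ h hint₂ hint₁).symm
end

section
/- Suppose f is holomorphic on the strip Ω_{a,b}, of exponential type, and Lebesgue integrable on some line ℝ - it₀ with t₀ ∈ (a,b). Then for every t ∈ (a,b) with f integrable on ℝ - it, the Gauss–Weierstrass regularized integrals converge: lim_{ε → 0⁺} ∫_{ℝ - it} e^{-ε z²} f(z) dz = ∫_{ℝ - it₀} f(z) dz. -/
open Complex Set MeasureTheory Filter Topology

lemma re_aux (ε u x : ℝ) : (-(ε:ℂ) * ((x:ℂ) - u*I)^2).re = -ε * (x^2 - u^2) := by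
  simp [Complex.ext_iff, pow_two, Complex.mul_re, Complex.mul_im]

lemma abs_aux (ε u x : ℝ) : ‖Complex.exp (-(ε:ℂ) * ((x:ℂ) - u*I)^2)‖ = Real.exp (-ε*(x^2 - u^2)) := by
  rw [Complex.norm_exp, re_aux]

lemma int_aux (ε u : ℝ) (hε : 0 ≤ ε) (f : ℂ → ℂ) (hint : Integrable (fun x : ℝ => f (x - u * I))) :
    Integrable (fun x : ℝ => Complex.exp (-(ε:ℂ) * ((x:ℂ) - u*I)^2) * f (x - u*I)) := by
  apply hint.bdd_mul (c := Real.exp (ε * u^2))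
  · exact (Complex.continuous_exp.comp (by continuity)).aestronglyMeasurable
  · refine ae_of_all _ (fun x => ?_)
    rw [abs_aux]
    apply Real.exp_le_exp.2
    nlinarith [sq_nonneg x]

lemma exp_decay_tendsto (s ε : ℝ) (hε : 0 < ε) :
    Tendsto (fun R : ℝ => Real.exp (s * |R| - ε * R^2)) atTop (𝓝 0) := by
  have h2 : Tendsto (fun R : ℝ => s - ε*R) atTop atBot := by
    have : Tendsto (fun R : ℝ => ε*R) atTop atTop :=
      Tendsto.const_mul_atTop hε tendsto_id
    have := tendsto_atBot_add_const_left atTop s (tendsto_neg_atTop_atBot.comp this)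
    simpa [Function.comp, sub_eq_add_neg] using this
  have h3 : Tendsto (fun R : ℝ => R * (s - ε*R)) atTop atBot :=
    tendsto_id.atTop_mul_atBot₀ h2
  have h4 : Tendsto (fun R : ℝ => Real.exp (R * (s - ε*R))) atTop (𝓝 0) :=
    Real.tendsto_exp_atBot.comp h3
  apply h4.congr'
  filter_upwards [eventually_ge_atTop (0:ℝ)] with R hR
  rw [_root_.abs_of_nonneg hR]; ring_nf

lemma mk_re' (x y : ℝ) : (Complex.mk x y).re = x := rfl
lemma mk_im' (x y : ℝ) : (Complex.mk x y).im = y := rfl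


lemma uniform_bound (a b : ℝ) (C : ℝ → ℝ) (K : Set ℝ) (hK : IsCompact K) (hKsub : K ⊆ Ioo a b)
    (hC : ∀ t ∈ Ioo a b, ∃ ε > 0, ∃ M : ℝ, ∀ t' ∈ Ioo a b, |t' - t| < ε → C t' ≤ M) :
    ∃ M, ∀ u ∈ K, C u ≤ M := by
  choose! ε hε M hM using hC
  obtain ⟨ts, hts, hcov⟩ := hK.elim_nhds_subcover (fun u => Metric.ball u (ε u))
    (fun u hu => Metric.ball_mem_nhds u (hε u (hKsub hu)))
  rcases ts.eq_empty_or_nonempty with rfl | hne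
  · exact ⟨0, fun u hu => absurd (hcov hu) (by simp)⟩
  refine ⟨ts.sup' hne M, fun u hu => ?_⟩
  obtain ⟨i, hi, hui⟩ := Set.mem_iUnion₂.mp (hcov hu)
  refine le_trans (hM i (hKsub (hts i hi)) u (hKsub hu) ?_) (Finset.le_sup' M hi)
  simpa [Real.dist_eq] using hui

lemma contour_shift (a b s : ℝ) (f : ℂ → ℂ)
    (hf : DifferentiableOn ℂ f {z : ℂ | z.im ∈ Ioo (-b) (-a)})
    (M : ℝ) (t t' : ℝ) (ht : t ∈ Ioo a b) (ht' : t' ∈ Ioo a b)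
    (hbound : ∀ x : ℝ, ∀ u ∈ uIcc t t', ‖f (x - u * I)‖ ≤ M * Real.exp (s * |x|))
    (hint : Integrable (fun x : ℝ => f (x - t * I)))
    (hint' : Integrable (fun x : ℝ => f (x - t' * I)))
    (ε : ℝ) (hε : 0 < ε) :
    ∫ x : ℝ, Complex.exp (-(ε:ℂ) * ((x:ℂ) - t * I) ^ 2) * f (x - t * I)
      = ∫ x : ℝ, Complex.exp (-(ε:ℂ) * ((x:ℂ) - t' * I) ^ 2) * f (x - t' * I) := by
  set g : ℂ → ℂ := fun z => Complex.exp (-(ε:ℂ) * z^2) * f z with hgdef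
  -- differentiability
  have hgdiff : DifferentiableOn ℂ g {z : ℂ | z.im ∈ Ioo (-b) (-a)} := by
    apply DifferentiableOn.mul _ hf
    apply Differentiable.differentiableOn
    exact Complex.differentiable_exp.comp ((differentiable_pow 2).const_mul _)
  -- strip membership of rectangle
  have hmemIm : ∀ u ∈ uIcc t t', -u ∈ Ioo (-b) (-a) := by
    intro u hu
    have hu' := hu
    rw [Set.mem_uIcc] at hu'
    constructor
    · rcases hu' with ⟨h1, h2⟩ | ⟨h1, h2⟩ <;> [skip; skip] <;>
        first
        | (have := ht.2; have := ht'.2; linarith)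
    · rcases hu' with ⟨h1, h2⟩ | ⟨h1, h2⟩ <;>
        (have := ht.1; have := ht'.1; linarith)
  -- the rectangle identity
  have key : ∀ R : ℝ,
      (∫ x in (-R)..R, g (x - t*I)) =
        (∫ x in (-R)..R, g (x - t'*I))
        + (I • (∫ y in (-t)..(-t'), g (-R + y*I)) - I • (∫ y in (-t)..(-t'), g (R + y*I))) := by
    intro R
    have hrect := Complex.integral_boundary_rect_eq_zero_of_differentiableOn g
      (Complex.mk (-R) (-t)) (Complex.mk R (-t')) ?_
    · simp only [mk_re', mk_im'] at hrect
      have e1 : ∀ x : ℝ, (x : ℂ) + ((-t : ℝ) : ℂ) * I = x - t * I := by intro x; push_cast; ring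
      have e2 : ∀ x : ℝ, (x : ℂ) + ((-t' : ℝ) : ℂ) * I = x - t' * I := by intro x; push_cast; ring
      simp only [Complex.ofReal_neg] at hrect ⊢
      have h1 : (∫ x in (-R)..R, g (x + -(t:ℂ) * I)) = ∫ x in (-R)..R, g (x - t*I) := by
        apply intervalIntegral.integral_congr; intro x _; ring_nf
      have h2 : (∫ x in (-R)..R, g (x + -(t':ℂ) * I)) = ∫ x in (-R)..R, g (x - t'*I) := by
        apply intervalIntegral.integral_congr; intro x _; ring_nf
      rw [h1, h2] at hrect
      linear_combination hrect
    · apply hgdiff.mono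
      intro z hz
      rw [Complex.mem_reProdIm] at hz
      have := hz.2
      simp only [mk_im'] at this
      have hsub : uIcc (-t) (-t') ⊆ Ioo (-b) (-a) := by
        intro y hy
        have : -(-y) ∈ Ioo (-b) (-a) := by
          apply hmemIm
          rw [Set.mem_uIcc] at hy ⊢
          rcases hy with ⟨h1,h2⟩|⟨h1,h2⟩
          · right; constructor <;> linarith
          · left; constructor <;> linarith
        simpa using this
      exact hsub this
  -- nonnegativity of M
  have hM0 : 0 ≤ M := by
    have h := hbound 0 t left_mem_uIcc
    simp only [abs_zero, mul_zero, Real.exp_zero, mul_one] at h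
    exact le_trans (norm_nonneg _) h
  set B : ℝ := max |t| |t'| with hBdef
  -- pointwise bound on vertical segments
  have hbnd : ∀ x y : ℝ, y ∈ uIcc (-t) (-t') →
      ‖g (x + y*I)‖ ≤ M * Real.exp (ε*B^2) * Real.exp (s*|x| - ε*x^2) := by
    intro x y hy
    have hyB : y^2 ≤ B^2 := by
      rw [Set.mem_uIcc] at hy
      have h5 : |t| ≤ B := le_max_left _ _
      have h6 : |t'| ≤ B := le_max_right _ _
      have h1 := le_abs_self t; have h2 := neg_abs_le t
      have h3 := le_abs_self t'; have h4 := neg_abs_le t'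
      have hB0 : 0 ≤ B := le_trans (abs_nonneg t) h5
      rcases hy with ⟨ha, hb⟩|⟨ha, hb⟩ <;> nlinarith
    have hxy : (x:ℂ) + y*I = (x:ℂ) - (↑(-y))*I := by push_cast; ring
    have hfy : ‖f ((x:ℂ) - (↑(-y))*I)‖ ≤ M * Real.exp (s*|x|) := by
      apply hbound
      rw [Set.mem_uIcc] at hy ⊢
      rcases hy with ⟨ha,hb⟩|⟨ha,hb⟩
      · right; constructor <;> linarith
      · left; constructor <;> linarith
    calc ‖g ((x:ℂ) + y*I)‖
        = ‖Complex.exp (-(ε:ℂ)*((x:ℂ) - (↑(-y))*I)^2)‖ * ‖f ((x:ℂ) - (↑(-y))*I)‖ := by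
          rw [hgdef]; simp only [hxy, norm_mul]
      _ ≤ Real.exp (-ε*(x^2 - (-y)^2)) * (M * Real.exp (s*|x|)) := by
          rw [abs_aux]
          exact mul_le_mul_of_nonneg_left hfy (Real.exp_nonneg _)
      _ = M * Real.exp ((-ε*(x^2 - (-y)^2)) + s*|x|) := by rw [Real.exp_add]; ring
      _ ≤ M * Real.exp (ε*B^2 + (s*|x| - ε*x^2)) := by
          apply mul_le_mul_of_nonneg_left _ hM0
          apply Real.exp_le_exp.2
          have : ε * y^2 ≤ ε * B^2 := mul_le_mul_of_nonneg_left hyB hε.le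
          nlinarith
      _ = M * Real.exp (ε*B^2) * Real.exp (s*|x| - ε*x^2) := by
          rw [mul_assoc, ← Real.exp_add]
  -- norm bound on vertical integrals
  have hvert : ∀ x : ℝ, ‖I • ∫ y in (-t)..(-t'), g (x + y*I)‖ ≤
      (M * Real.exp (ε*B^2) * |(-t') - (-t)|) * Real.exp (s*|x| - ε*x^2) := by
    intro x
    rw [norm_smul, Complex.norm_I, one_mul]
    have h := intervalIntegral.norm_integral_le_of_norm_le_const
      (C := M * Real.exp (ε*B^2) * Real.exp (s*|x| - ε*x^2))
      (f := fun y : ℝ => g (x + y*I)) (a := -t) (b := -t')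
      (fun y hy => hbnd x y (Ioc_subset_Icc_self hy))
    calc ‖∫ y in (-t)..(-t'), g (x + y*I)‖
        ≤ M * Real.exp (ε*B^2) * Real.exp (s*|x| - ε*x^2) * |(-t') - (-t)| := h
      _ = (M * Real.exp (ε*B^2) * |(-t') - (-t)|) * Real.exp (s*|x| - ε*x^2) := by ring
  -- vertical contributions vanish
  have hc : Tendsto (fun R : ℝ =>
      (M * Real.exp (ε*B^2) * |(-t') - (-t)|) * Real.exp (s*|R| - ε*R^2)) atTop (𝓝 0) := by
    have := (exp_decay_tendsto s ε hε).const_mul (M * Real.exp (ε*B^2) * |(-t') - (-t)|)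
    simpa using this
  have hW1 : Tendsto (fun R : ℝ => I • ∫ y in (-t)..(-t'), g (-(R:ℂ) + y*I)) atTop (𝓝 0) := by
    apply squeeze_zero_norm (fun R => ?_) hc
    have h := hvert (-R)
    simpa [Complex.ofReal_neg, neg_sq, abs_neg] using h
  have hW2 : Tendsto (fun R : ℝ => I • ∫ y in (-t)..(-t'), g ((R:ℂ) + y*I)) atTop (𝓝 0) :=
    squeeze_zero_norm (fun R => hvert R) hc
  have hWlim : Tendsto (fun R : ℝ =>
      (I • ∫ y in (-t)..(-t'), g (-(R:ℂ) + y*I)) - I • ∫ y in (-t)..(-t'), g ((R:ℂ) + y*I))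
      atTop (𝓝 0) := by
    simpa using hW1.sub hW2
  -- horizontal limits
  have hA : Tendsto (fun R : ℝ => ∫ x in (-R)..R, g (x - t*I)) atTop
      (𝓝 (∫ x : ℝ, g (x - t*I))) :=
    intervalIntegral_tendsto_integral (int_aux ε t hε.le f hint) tendsto_neg_atTop_atBot tendsto_id
  have hB2 : Tendsto (fun R : ℝ => ∫ x in (-R)..R, g (x - t'*I)) atTop
      (𝓝 (∫ x : ℝ, g (x - t'*I))) :=
    intervalIntegral_tendsto_integral (int_aux ε t' hε.le f hint') tendsto_neg_atTop_atBot tendsto_id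
  have hcomb : Tendsto (fun R : ℝ => ∫ x in (-R)..R, g (x - t*I)) atTop
      (𝓝 ((∫ x : ℝ, g (x - t'*I)) + 0)) := by
    apply (hB2.add hWlim).congr
    intro R
    exact (key R).symm
  have hfin := tendsto_nhds_unique hA hcomb
  rw [add_zero] at hfin
  simpa only [hgdef, neg_mul] using hfin

lemma dct_line (u : ℝ) (f : ℂ → ℂ) (hint : Integrable (fun x : ℝ => f (x - u * I))) :
    Tendsto (fun ε : ℝ => ∫ x : ℝ, Complex.exp (-(ε:ℂ) * ((x:ℂ) - u*I)^2) * f (x - u*I))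
      (𝓝[>] 0) (𝓝 (∫ x : ℝ, f (x - u*I))) := by
  apply tendsto_integral_filter_of_dominated_convergence
    (fun x : ℝ => Real.exp (u^2) * ‖f (x - u*I)‖)
  · filter_upwards with ε
    exact ((Complex.continuous_exp.comp (by continuity)).aestronglyMeasurable).mul
      hint.aestronglyMeasurable
  · filter_upwards [Ioc_mem_nhdsGT_of_mem (by norm_num : (0:ℝ) ∈ Ico (0:ℝ) 1)] with ε hε
    filter_upwards with x
    rw [norm_mul, abs_aux]
    apply mul_le_mul_of_nonneg_right _ (norm_nonneg _)
    apply Real.exp_le_exp.2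
    have h1 := hε.1
    have h2 := hε.2
    nlinarith [sq_nonneg x, sq_nonneg u]
  · exact hint.norm.const_mul _
  · filter_upwards with x
    have hcont : Continuous (fun ε : ℝ =>
        Complex.exp (-(ε:ℂ) * ((x:ℂ) - u*I)^2) * f (x - u*I)) := by
      apply Continuous.mul _ continuous_const
      exact Complex.continuous_exp.comp (by continuity)
    have h0 : Tendsto (fun ε : ℝ =>
        Complex.exp (-(ε:ℂ) * ((x:ℂ) - u*I)^2) * f (x - u*I)) (𝓝 0)
        (𝓝 (f (x - u*I))) := by
      have := hcont.tendsto 0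
      simpa using this
    exact h0.mono_left nhdsWithin_le_nhds

/-- Gauss–Weierstrass summation: if `f` is holomorphic of exponential type on the
strip `Ω_{a,b}` and integrable on some line `ℝ - i t₀`, then for every line
`ℝ - i t` of the strip the Gauss–Weierstrass regularized integrals converge to
the integral over `ℝ - i t₀`. -/
theorem gauss_weierstrass_summation (a b s t₀ : ℝ) (C : ℝ → ℝ) (f : ℂ → ℂ)
    (hab : a < b)
    (hf : DifferentiableOn ℂ f {z : ℂ | z.im ∈ Set.Ioo (-b) (-a)})
    (hC : ∀ t ∈ Set.Ioo a b, ∃ ε > 0, ∃ M : ℝ, ∀ t' ∈ Set.Ioo a b,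
      |t' - t| < ε → C t' ≤ M)
    (hgrowth : ∀ (x : ℝ), ∀ t ∈ Set.Ioo a b,
      ‖f (x - t * Complex.I)‖ ≤ C t * Real.exp (s * |x|))
    (ht₀ : t₀ ∈ Set.Ioo a b)
    (hint₀ : Integrable (fun x : ℝ => f (x - t₀ * Complex.I))) :
    ∀ t ∈ Set.Ioo a b, Integrable (fun x : ℝ => f (x - t * Complex.I)) →
      Tendsto
        (fun ε : ℝ =>
          ∫ x : ℝ, Complex.exp (-ε * (x - t * Complex.I) ^ 2) * f (x - t * Complex.I))
        (𝓝[>] 0)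
        (𝓝 (∫ x : ℝ, f (x - t₀ * Complex.I))) := by
  intro t ht hintt
  have hsub : uIcc t t₀ ⊆ Ioo a b := Set.ordConnected_Ioo.uIcc_subset ht ht₀
  obtain ⟨M, hM⟩ := uniform_bound a b C _ isCompact_uIcc hsub hC
  have hbound : ∀ x : ℝ, ∀ u ∈ uIcc t t₀, ‖f (x - u * I)‖ ≤ M * Real.exp (s * |x|) := by
    intro x u hu
    exact (hgrowth x u (hsub hu)).trans
      (mul_le_mul_of_nonneg_right (hM u hu) (Real.exp_nonneg _))
  have heq : ∀ ε ∈ Ioi (0:ℝ),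
      (∫ x : ℝ, Complex.exp (-(ε:ℂ) * ((x:ℂ) - t₀ * I) ^ 2) * f (x - t₀ * I))
      = ∫ x : ℝ, Complex.exp (-(ε:ℂ) * ((x:ℂ) - t * I) ^ 2) * f (x - t * I) := by
    intro ε hε
    exact contour_shift a b s f hf M t₀ t ht₀ ht
      (fun x u hu => hbound x u (by rwa [Set.uIcc_comm] at hu)) hint₀ hintt ε hε
  have hd := dct_line t₀ f hint₀
  apply hd.congr'
  filter_upwards [self_mem_nhdsWithin] with ε hε
  exact heq ε hε
end

section
/- For all complex numbers z₁ and z₂, |Im √(z₁ + z₂)| ≤ |Im √z₁| + |Im √z₂|, where √ denotes the principal branch of the complex square root. -/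
open Complex

lemma sq_im_sqrt (z : ℂ) : (z ^ (1 / 2 : ℂ)).im ^ 2 = (‖z‖ - z.re) / 2 := by
  rcases eq_or_ne z 0 with rfl | hz
  · simp [Complex.zero_cpow (by norm_num : (1 / 2 : ℂ) ≠ 0)]
  · set w := z ^ (1 / 2 : ℂ) with hwdef
    have hw : w * w = z := by
      rw [hwdef, ← Complex.cpow_add _ _ hz]
      norm_num
    have habs : ‖z‖ = w.re * w.re + w.im * w.im := by
      rw [← hw, norm_mul, ← sq, Complex.sq_norm, Complex.normSq_apply]
    have hre : z.re = w.re * w.re - w.im * w.im := by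
      rw [← hw, Complex.mul_re]
    rw [habs, hre]; ring

lemma sqrt_add_le' {a b : ℝ} (ha : 0 ≤ a) (hb : 0 ≤ b) :
    Real.sqrt (a + b) ≤ Real.sqrt a + Real.sqrt b := by
  have h : a + b ≤ (Real.sqrt a + Real.sqrt b) ^ 2 := by
    have h1 := Real.sq_sqrt ha
    have h2 := Real.sq_sqrt hb
    nlinarith [Real.sqrt_nonneg a, Real.sqrt_nonneg b]
  calc Real.sqrt (a + b) ≤ Real.sqrt ((Real.sqrt a + Real.sqrt b) ^ 2) := Real.sqrt_le_sqrt h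
    _ = Real.sqrt a + Real.sqrt b := Real.sqrt_sq (by positivity)

lemma abs_im_sqrt (z : ℂ) :
    |(z ^ (1 / 2 : ℂ)).im| = Real.sqrt ((‖z‖ - z.re) / 2) := by
  rw [← sq_im_sqrt, Real.sqrt_sq_eq_abs]

/-- For the principal branch of the complex square root,
`|Im √(z₁ + z₂)| ≤ |Im √z₁| + |Im √z₂|`. -/
theorem abs_im_sqrt_add_le (z₁ z₂ : ℂ) :
    |((z₁ + z₂) ^ (1 / 2 : ℂ)).im| ≤ |(z₁ ^ (1 / 2 : ℂ)).im| + |(z₂ ^ (1 / 2 : ℂ)).im| := by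
  rw [abs_im_sqrt, abs_im_sqrt, abs_im_sqrt]
  calc Real.sqrt ((‖z₁ + z₂‖ - (z₁ + z₂).re) / 2)
      ≤ Real.sqrt ((‖z₁‖ - z₁.re) / 2 + (‖z₂‖ - z₂.re) / 2) := by
        apply Real.sqrt_le_sqrt
        have := norm_add_le z₁ z₂
        simp only [Complex.add_re]
        linarith
    _ ≤ Real.sqrt ((‖z₁‖ - z₁.re) / 2) + Real.sqrt ((‖z₂‖ - z₂.re) / 2) :=
        sqrt_add_le' (by linarith [Complex.re_le_norm z₁])
          (by linarith [Complex.re_le_norm z₂])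
end

section
/- Let f be locally integrable on (0, ∞), b > 0, and n ≥ 0. If the function x ↦ e^{-bx}(1 + |x|)^n f(x) belongs to L¹(0, ∞), then the function x ↦ e^{-bx}(1 + |x|)^n ∫₀ˣ f(t) dt also belongs to L¹(0, ∞). -/
open MeasureTheory Set Real

/-- If `f` is locally integrable on `(0,∞)`, `b > 0`, `n ≥ 0`, and
`x ↦ e^{-bx}(1+|x|)^n f x` is in `L¹(0,∞)`, then
`x ↦ e^{-bx}(1+|x|)^n ∫₀ˣ f` is also in `L¹(0,∞)`. -/
theorem weighted_primitive_integrable (f : ℝ → ℝ) (b n : ℝ) (hb : 0 < b) (hn : 0 ≤ n)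
    (hloc : LocallyIntegrableOn f (Set.Ioi 0))
    (hf : IntegrableOn (fun x : ℝ => Real.exp (-b * x) * (1 + |x|) ^ n * f x) (Set.Ioi 0)) :
    IntegrableOn
      (fun x : ℝ => Real.exp (-b * x) * (1 + |x|) ^ n * ∫ t in Set.Ioc (0 : ℝ) x, f t)
      (Set.Ioi 0) := by
  set w : ℝ → ℝ := fun x => Real.exp (-b * x) * (1 + |x|) ^ n with hw_def
  have hw_nonneg : ∀ x, 0 ≤ w x := fun x => by positivity
  have hw_pow_ge_one : ∀ x : ℝ, 1 ≤ (1 + |x|) ^ n := fun x =>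
    Real.one_le_rpow (by linarith [abs_nonneg x]) hn
  have hw_cont : Continuous w := by
    apply Continuous.mul
    · exact (continuous_const.mul continuous_id).rexp
    · exact (continuous_const.add continuous_abs).rpow_const fun x => Or.inr hn
  -- f is integrable on Ioc 0 x for every x
  have hfi : ∀ x : ℝ, IntegrableOn f (Set.Ioc 0 x) := by
    intro x
    rcases le_or_gt x 0 with hx | hx
    · rw [Set.Ioc_eq_empty (by linarith)]; simp [IntegrableOn]
    · have hmeas : AEStronglyMeasurable f (volume.restrict (Set.Ioc 0 x)) :=
        hloc.aestronglyMeasurable.mono_measure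
          (Measure.restrict_mono Set.Ioc_subset_Ioi_self le_rfl)
      have hbound : IntegrableOn (fun t => Real.exp (b * x) * ‖w t * f t‖) (Set.Ioc 0 x) :=
        ((hf.mono_set Set.Ioc_subset_Ioi_self).norm.const_mul _)
      refine Integrable.mono' hbound hmeas ?_
      rw [ae_restrict_iff' measurableSet_Ioc]
      refine Filter.Eventually.of_forall fun t ht => ?_
      have h1 : Real.exp (-b * x) ≤ w t := by
        have : Real.exp (-b * x) ≤ Real.exp (-b * t) :=
          Real.exp_le_exp.2 (by nlinarith [ht.1, ht.2])
        calc Real.exp (-b * x) ≤ Real.exp (-b * t) * 1 := by linarith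
          _ ≤ w t := mul_le_mul_of_nonneg_left (hw_pow_ge_one t) (Real.exp_pos _).le
      have h2 : ‖w t * f t‖ = w t * ‖f t‖ := by
        rw [norm_mul, Real.norm_of_nonneg (hw_nonneg t)]
      rw [h2]
      calc ‖f t‖ = Real.exp (b * x) * (Real.exp (-b * x) * ‖f t‖) := by
            rw [← mul_assoc, ← Real.exp_add]; simp
        _ ≤ Real.exp (b * x) * (w t * ‖f t‖) := by
            apply mul_le_mul_of_nonneg_left _ (Real.exp_pos _).le
            exact mul_le_mul_of_nonneg_right h1 (norm_nonneg _)
  -- the primitive is continuous on (0, ∞)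
  set F : ℝ → ℝ := fun x => ∫ t in Set.Ioc (0 : ℝ) x, f t with hF_def
  have hF_meas : AEStronglyMeasurable F (volume.restrict (Set.Ioi 0)) := by
    have hcont : ∀ x₀ : ℝ, 0 < x₀ → ContinuousAt F x₀ := by
      intro x₀ hx₀
      have hInt : IntegrableOn f (Set.Icc 0 (x₀ + 1)) :=
        (integrableOn_Icc_iff_integrableOn_Ioc (f := f)).2 (hfi (x₀ + 1))
      have := intervalIntegral.continuousOn_primitive (f := f) (a := 0) (b := x₀ + 1)
        (μ := volume) hInt
      exact this.continuousAt (Icc_mem_nhds (by linarith) (by linarith))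
    exact (ContinuousOn.aestronglyMeasurable
      (fun x hx => (hcont x hx).continuousWithinAt) measurableSet_Ioi)
  have h_target_meas :
      AEStronglyMeasurable (fun x => w x * F x) (volume.restrict (Set.Ioi 0)) :=
    (hw_cont.aestronglyMeasurable.restrict).mul hF_meas
  -- the two L¹ functions to convolve
  set g : ℝ → ℝ := (Set.Ioi (0 : ℝ)).indicator (fun t => w t * |f t|) with hg_def
  set k : ℝ → ℝ := (Set.Ici (0 : ℝ)).indicator w with hk_def
  have hg_nonneg : ∀ t, 0 ≤ g t := fun t =>
    Set.indicator_nonneg (fun s _ => mul_nonneg (hw_nonneg s) (abs_nonneg _)) t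
  have hk_nonneg : ∀ t, 0 ≤ k t := fun t =>
    Set.indicator_nonneg (fun s _ => hw_nonneg s) t
  have hg_int : Integrable g := by
    rw [hg_def, integrable_indicator_iff measurableSet_Ioi]
    have : (fun t => w t * |f t|) = fun t => ‖w t * f t‖ := by
      funext t; rw [norm_mul, Real.norm_of_nonneg (hw_nonneg t), Real.norm_eq_abs]
    rw [this]
    exact hf.norm
  have hk_int : Integrable k := by
    rw [hk_def, integrable_indicator_iff measurableSet_Ici]
    -- compare with translate of x ↦ x^n e^{-bx}
    have base : IntegrableOn (fun x : ℝ => x ^ n * Real.exp (-b * x)) (Set.Ioi 0) := by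
      have := integrableOn_rpow_mul_exp_neg_mul_rpow
        (by linarith : (-1 : ℝ) < n) one_pos hb
      simpa using this
    have base' : Integrable ((Set.Ioi (0:ℝ)).indicator (fun x => x ^ n * Real.exp (-b * x))) :=
      (integrable_indicator_iff measurableSet_Ioi).2 base
    have shift : Integrable
        (fun x : ℝ => Real.exp b *
          (Set.Ioi (0:ℝ)).indicator (fun y => y ^ n * Real.exp (-b * y)) (x + 1)) := by
      have h0 := (base'.comp_sub_right (-1)).const_mul (Real.exp b)
      refine h0.congr (Filter.Eventually.of_forall fun x => ?_)
      simp only [sub_neg_eq_add]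
    refine Integrable.mono' (shift.integrableOn) (hw_cont.aestronglyMeasurable.restrict) ?_
    rw [ae_restrict_iff' measurableSet_Ici]
    refine Filter.Eventually.of_forall fun x hx => ?_
    have hx0 : (0:ℝ) ≤ x := hx
    have hx1 : x + 1 ∈ Set.Ioi (0:ℝ) := by simp; linarith
    rw [Set.indicator_of_mem hx1, Real.norm_of_nonneg (hw_nonneg x)]
    have : w x = Real.exp b * ((x + 1) ^ n * Real.exp (-b * (x + 1))) := by
      rw [hw_def]
      simp only [abs_of_nonneg hx0]
      rw [show Real.exp b * ((x + 1) ^ n * Real.exp (-b * (x + 1)))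
          = (x + 1) ^ n * (Real.exp b * Real.exp (-b * (x + 1))) by ring,
        ← Real.exp_add]
      ring_nf
    rw [this]
  -- the convolution g ⋆ k is integrable and dominates
  set L := ContinuousLinearMap.mul ℝ ℝ with hL_def
  have hconv_int : Integrable (convolution g k L volume) :=
    hg_int.integrable_convolution L hk_int
  have hconv_ae : ∀ᵐ x : ℝ, ConvolutionExistsAt g k x L volume :=
    hg_int.ae_convolution_exists L hk_int
  refine Integrable.mono' hconv_int.integrableOn h_target_meas ?_
  have h1 := ae_restrict_of_ae (μ := volume) (s := Set.Ioi 0) hconv_ae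
  filter_upwards [h1, ae_restrict_mem measurableSet_Ioi] with x hx_conv hx_mem
  have hx : (0:ℝ) < x := hx_mem
  have hx_slice : Integrable (fun t => g t * k (x - t)) := by
    have := hx_conv.integrable
    simpa only [hL_def, ContinuousLinearMap.mul_apply'] using this
  -- pointwise inequality on Ioc 0 x
  have key : ∀ t ∈ Set.Ioc (0:ℝ) x, w x * ‖f t‖ ≤ g t * k (x - t) := by
    intro t ht
    have ht0 : 0 < t := ht.1
    have htx : t ≤ x := ht.2
    have hxt0 : 0 ≤ x - t := by linarith
    rw [hg_def, hk_def, Set.indicator_of_mem (Set.mem_Ioi.2 ht0),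
      Set.indicator_of_mem (Set.mem_Ici.2 hxt0)]
    have hww : w x ≤ w t * w (x - t) := by
      rw [hw_def]
      simp only [abs_of_nonneg hx.le, abs_of_nonneg ht0.le, abs_of_nonneg hxt0]
      have hexp : Real.exp (-b * x) = Real.exp (-b * t) * Real.exp (-b * (x - t)) := by
        rw [← Real.exp_add]; ring_nf
      have hpow : (1 + x) ^ n ≤ (1 + t) ^ n * (1 + (x - t)) ^ n := by
        rw [← Real.mul_rpow (by linarith) (by linarith)]
        apply Real.rpow_le_rpow (by linarith) _ hn
        nlinarith
      calc Real.exp (-b * x) * (1 + x) ^ n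
          ≤ Real.exp (-b * x) * ((1 + t) ^ n * (1 + (x - t)) ^ n) :=
            mul_le_mul_of_nonneg_left hpow (Real.exp_pos _).le
        _ = Real.exp (-b * t) * (1 + t) ^ n * (Real.exp (-b * (x - t)) * (1 + (x - t)) ^ n) := by
            rw [hexp]; ring
    calc w x * ‖f t‖ ≤ (w t * w (x - t)) * ‖f t‖ :=
          mul_le_mul_of_nonneg_right hww (norm_nonneg _)
      _ = w t * |f t| * w (x - t) := by rw [Real.norm_eq_abs]; ring
  -- assemble the bound
  have step1 : ‖w x * F x‖ ≤ w x * ∫ t in Set.Ioc (0:ℝ) x, ‖f t‖ := by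
    rw [norm_mul, Real.norm_of_nonneg (hw_nonneg x)]
    exact mul_le_mul_of_nonneg_left (norm_integral_le_integral_norm _) (hw_nonneg x)
  have step2 : w x * ∫ t in Set.Ioc (0:ℝ) x, ‖f t‖
      = ∫ t in Set.Ioc (0:ℝ) x, w x * ‖f t‖ := (MeasureTheory.integral_const_mul _ _).symm
  have step3 : ∫ t in Set.Ioc (0:ℝ) x, w x * ‖f t‖
      ≤ ∫ t in Set.Ioc (0:ℝ) x, g t * k (x - t) := by
    apply setIntegral_mono_on ((hfi x).norm.const_mul _) hx_slice.integrableOn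
      measurableSet_Ioc key
  have step4 : ∫ t in Set.Ioc (0:ℝ) x, g t * k (x - t) ≤ ∫ t, g t * k (x - t) :=
    setIntegral_le_integral hx_slice
      (Filter.Eventually.of_forall fun t => mul_nonneg (hg_nonneg t) (hk_nonneg _))
  have hconv_eq : convolution g k L volume x = ∫ t, g t * k (x - t) := by
    rw [convolution_def]
    simp [hL_def, ContinuousLinearMap.mul_apply']
  rw [hconv_eq]
  calc ‖w x * F x‖ ≤ w x * ∫ t in Set.Ioc (0:ℝ) x, ‖f t‖ := step1
    _ = ∫ t in Set.Ioc (0:ℝ) x, w x * ‖f t‖ := step2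
    _ ≤ ∫ t in Set.Ioc (0:ℝ) x, g t * k (x - t) := step3
    _ ≤ ∫ t, g t * k (x - t) := step4
end
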